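/- Let A₁₁, A₁₂, A₂₁, A₂₂ be 2×2 complex matrices with A₁₁ positive definite and A₂₁ = A₁₂*, and let λ ∈ ℂ with Im λ ≠ 0. Then the set of 2×2 matrices M satisfying M*A₁₁M ≤ A₂₁M + M*A₁₂ - A₂₂ + (Im M)/(Im λ) (inequality of Hermitian matrices, where Im M = (M - M*)/(2i)) is bounded in operator norm. -/

import Mathlib

open Matrix Complex
open scoped ComplexOrder

lemma exists_eps_posSemidef {A : Matrix (Fin 2) (Fin 2) ℂ} (hA : A.PosDef) :
    ∃ ε : ℝ, 0 < ε ∧ (A - (ε : ℝ) • (1 : Matrix (Fin 2) (Fin 2) ℂ)).PosSemidef := by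
  have hH := hA.isHermitian
  set ev := hH.eigenvalues with hev
  set ε := min (ev 0) (ev 1) with hε
  refine ⟨ε, lt_min (hA.eigenvalues_pos 0) (hA.eigenvalues_pos 1), ?_⟩
  set U : Matrix (Fin 2) (Fin 2) ℂ := (hH.eigenvectorUnitary : Matrix (Fin 2) (Fin 2) ℂ) with hUdef
  have hU : U * star U = 1 := mem_unitaryGroup_iff.mp hH.eigenvectorUnitary.2
  have key : A - (ε : ℝ) • (1 : Matrix (Fin 2) (Fin 2) ℂ)
      = U * (diagonal (fun i => ((ev i - ε : ℝ) : ℂ))) * star U := by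
    have h1 : (ε : ℝ) • (1 : Matrix (Fin 2) (Fin 2) ℂ)
        = U * ((ε : ℝ) • (1 : Matrix (Fin 2) (Fin 2) ℂ)) * star U := by
      rw [mul_smul_comm, smul_mul_assoc, mul_one, hU]
    have h2 : diagonal (RCLike.ofReal ∘ ev) - (ε : ℝ) • (1 : Matrix (Fin 2) (Fin 2) ℂ)
        = diagonal (fun i => ((ev i - ε : ℝ) : ℂ)) := by
      ext i j
      by_cases h : i = j <;>
        simp [h, diagonal, Matrix.one_apply, Complex.ofReal_sub, Matrix.smul_apply,
          RCLike.ofReal]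
    conv_lhs => rw [hH.spectral_theorem, Unitary.conjStarAlgAut_apply, ← hUdef, h1]
    rw [← sub_mul, ← mul_sub]
    rw [h2]
  rw [key]
  have hdiag : (diagonal (fun i => ((ev i - ε : ℝ) : ℂ))).PosSemidef := by
    refine Matrix.PosSemidef.diagonal fun i => ?_
    rw [Pi.zero_apply, Complex.zero_le_real]
    fin_cases i
    · simpa [hε] using min_le_left (ev 0) (ev 1)
    · simpa [hε] using min_le_right (ev 0) (ev 1)
  simpa [Matrix.star_eq_conjTranspose] using hdiag.mul_mul_conjTranspose_same U

/-- The generalized Weyl disk is bounded: if `A₁₁` is positive definite,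
`A₂₁ = A₁₂*`, and `Im λ ≠ 0`, then the set of matrices `M` with
`M*A₁₁M ≤ A₂₁M + M*A₁₂ - A₂₂ + (Im M)/(Im λ)` is bounded (entrywise). -/
theorem weyl_disk_bounded
    (A₁₁ A₁₂ A₂₁ A₂₂ : Matrix (Fin 2) (Fin 2) ℂ)
    (hA₁₁ : A₁₁.PosDef) (hA : A₂₁ = A₁₂ᴴ)
    (lam : ℂ) (hlam : lam.im ≠ 0) :
    ∃ R : ℝ, 0 < R ∧ ∀ M : Matrix (Fin 2) (Fin 2) ℂ,
      (A₂₁ * M + Mᴴ * A₁₂ - A₂₂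
          + (((lam.im : ℂ)⁻¹ * (2 * Complex.I)⁻¹) • (M - Mᴴ))
          - Mᴴ * A₁₁ * M).PosSemidef →
      ∀ i j : Fin 2, ‖M i j‖ ≤ R := by
  obtain ⟨ε, hε, hεA⟩ := exists_eps_posSemidef hA₁₁
  set c : ℂ := (lam.im : ℂ)⁻¹ * (2 * Complex.I)⁻¹ with hc
  have hcI : c = -(2⁻¹ * ((lam.im : ℂ))⁻¹) * Complex.I := by
    rw [hc, mul_inv, Complex.inv_I]
    ring
  have hcstar : star c = -c := by
    rw [hcI]
    simp only [star_neg, star_mul', Complex.star_def, Complex.conj_I, map_inv₀,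
      Complex.conj_ofReal, map_ofNat]
    ring
  have hdet : IsUnit A₁₁.det := hA₁₁.det_pos.ne'.isUnit
  have hinv1 : A₁₁⁻¹ * A₁₁ = 1 := Matrix.nonsing_inv_mul _ hdet
  have hinv2 : A₁₁ * A₁₁⁻¹ = 1 := Matrix.mul_nonsing_inv _ hdet
  have hinvH : A₁₁⁻¹ᴴ = A₁₁⁻¹ := hA₁₁.isHermitian.inv
  set K := A₂₁ + c • (1 : Matrix (Fin 2) (Fin 2) ℂ) with hK
  have hKH : Kᴴ = A₁₂ - c • 1 := by
    rw [hK, conjTranspose_add, hA, conjTranspose_conjTranspose, conjTranspose_smul,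
      conjTranspose_one, hcstar, neg_smul, ← sub_eq_add_neg]
  set N := A₁₁⁻¹ * Kᴴ with hN
  set D := K * A₁₁⁻¹ * Kᴴ - A₂₂ with hD
  set Cm : ℝ := max (max ((D 0 0).re) ((D 1 1).re)) 0 with hCm
  set n0 : ℝ := max (max (‖N 0 0‖) (‖N 0 1‖))
      (max (‖N 1 0‖) (‖N 1 1‖)) with hn0
  have hn0nn : 0 ≤ n0 :=
    le_trans (norm_nonneg _) (le_trans (le_max_left _ _) (le_max_left _ _))
  refine ⟨1 + Real.sqrt (Cm / ε) + n0, by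
    have := Real.sqrt_nonneg (Cm / ε); linarith, ?_⟩
  intro M hM i j
  set X := M - N with hX
  have hAN : A₁₁ * N = Kᴴ := by rw [hN, ← mul_assoc, hinv2, one_mul]
  have hNH : Nᴴ = K * A₁₁⁻¹ := by
    rw [hN, conjTranspose_mul, hinvH, conjTranspose_conjTranspose]
  have hNA : Nᴴ * A₁₁ = K := by rw [hNH, mul_assoc, hinv1, mul_one]
  have expand : Xᴴ * A₁₁ * X
      = Mᴴ * A₁₁ * M - Mᴴ * Kᴴ - K * M + K * A₁₁⁻¹ * Kᴴ := by
    rw [hX, conjTranspose_sub, sub_mul, hNA, sub_mul, mul_sub, mul_sub,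
      mul_assoc Mᴴ A₁₁ N, hAN, hN, ← mul_assoc K A₁₁⁻¹ Kᴴ]
    abel
  have key : A₂₁ * M + Mᴴ * A₁₂ - A₂₂ + c • (M - Mᴴ) - Mᴴ * A₁₁ * M
      = D - Xᴴ * A₁₁ * X := by
    have hKM : K * M = A₂₁ * M + c • M := by rw [hK, add_mul, smul_mul_assoc, one_mul]
    have hMK : Mᴴ * Kᴴ = Mᴴ * A₁₂ - c • Mᴴ := by rw [hKH, mul_sub, mul_smul_comm, mul_one]
    rw [expand, hD, hKM, hMK, smul_sub]
    abel
  rw [key] at hM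
  -- evaluate the quadratic form at the standard basis vector `e j`
  set v : Fin 2 → ℂ := Pi.single j 1 with hv
  have hstarv : star v = v := by
    ext k
    simp [hv, Pi.single_apply, apply_ite]
  set y : Fin 2 → ℂ := X *ᵥ v with hy
  have hyk : ∀ k, y k = X k j := by
    intro k
    simp [hy, hv]
  have h1 := hM.dotProduct_mulVec_nonneg v
  rw [sub_mulVec, dotProduct_sub, sub_nonneg] at h1
  have ha : star v ⬝ᵥ (D *ᵥ v) = D j j := by
    rw [hstarv, hv, single_dotProduct, one_mul, mulVec_single]
    simp
  have hb : star v ⬝ᵥ ((Xᴴ * A₁₁ * X) *ᵥ v) = star y ⬝ᵥ (A₁₁ *ᵥ y) := by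
    rw [hy, ← mulVec_mulVec, ← mulVec_mulVec, dotProduct_mulVec, ← star_mulVec]
  -- lower bound from positive definiteness
  have h2 := hεA.dotProduct_mulVec_nonneg y
  rw [sub_mulVec, dotProduct_sub, sub_nonneg, smul_mulVec, one_mulVec,
    dotProduct_smul] at h2
  have hs : star y ⬝ᵥ y = ((normSq (X 0 j) + normSq (X 1 j) : ℝ) : ℂ) := by
    simp only [dotProduct, Fin.sum_univ_two, Pi.star_apply, Complex.star_def, hyk,
      ← Complex.normSq_eq_conj_mul_self, Complex.ofReal_add]
  have h3 : ((ε * (normSq (X 0 j) + normSq (X 1 j)) : ℝ) : ℂ) ≤ D j j := by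
    calc ((ε * (normSq (X 0 j) + normSq (X 1 j)) : ℝ) : ℂ)
        = ε • (star y ⬝ᵥ y) := by
          rw [hs, Complex.real_smul, Complex.ofReal_mul]
      _ ≤ star y ⬝ᵥ (A₁₁ *ᵥ y) := h2
      _ = star v ⬝ᵥ ((Xᴴ * A₁₁ * X) *ᵥ v) := hb.symm
      _ ≤ star v ⬝ᵥ (D *ᵥ v) := h1
      _ = D j j := ha
  have h4 : ε * (normSq (X 0 j) + normSq (X 1 j)) ≤ (D j j).re := by
    have := (Complex.le_def.mp h3).1
    simpa using this
  have hDC : (D j j).re ≤ Cm := by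
    fin_cases j
    · exact le_trans (le_max_left _ _) (le_max_left _ _)
    · exact le_trans (le_max_right _ _) (le_max_left _ _)
  have h5 : normSq (X i j) ≤ Cm / ε := by
    rw [le_div_iff₀ hε]
    have hnn0 : 0 ≤ normSq (X 0 j) := normSq_nonneg _
    have hnn1 : 0 ≤ normSq (X 1 j) := normSq_nonneg _
    have hle : normSq (X i j) ≤ normSq (X 0 j) + normSq (X 1 j) := by
      fin_cases i <;> simp <;> linarith
    nlinarith
  have h6 : ‖X i j‖ ≤ Real.sqrt (Cm / ε) := by
    rw [Complex.norm_def]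
    exact Real.sqrt_le_sqrt h5
  have hNb : ‖N i j‖ ≤ n0 := by
    fin_cases i <;> fin_cases j
    · exact le_trans (le_max_left _ _) (le_max_left _ _)
    · exact le_trans (le_max_right _ _) (le_max_left _ _)
    · exact le_trans (le_max_left _ _) (le_max_right _ _)
    · exact le_trans (le_max_right _ _) (le_max_right _ _)
  have hMX : M i j = X i j + N i j := by simp [hX]
  calc ‖M i j‖ = ‖X i j + N i j‖ := by rw [hMX]
    _ ≤ ‖X i j‖ + ‖N i j‖ := norm_add_le _ _
    _ ≤ Real.sqrt (Cm / ε) + n0 := add_le_add h6 hNb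
    _ ≤ 1 + Real.sqrt (Cm / ε) + n0 := by linarith
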